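/- Let Γ be a modular trek from Ω_A to Ω_B. If ω ∈ dom(D_M) and l ≥ D_M(ω), then the trek target set t_Γ(ω|l) is a nonempty subset of {η ∈ N : D_N(η) ≤ l} which is compact for the norm ‖·‖_N. -/

import Mathlib

open scoped ComplexOrder

noncomputable section

/-! ### Admissible functions -/

/-- A function `F : [0,∞)⁴ → [0,∞)` is admissible when it is nondecreasing in each argument
and dominates `x₁x₃ + x₂x₄`. -/
def Admissible (F : ℝ → ℝ → ℝ → ℝ → ℝ) : Prop :=
  (∀ x₁ x₂ x₃ x₄ y₁ y₂ y₃ y₄ : ℝ, 0 ≤ x₁ → 0 ≤ x₂ → 0 ≤ x₃ → 0 ≤ x₄ →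
      x₁ ≤ y₁ → x₂ ≤ y₂ → x₃ ≤ y₃ → x₄ ≤ y₄ → F x₁ x₂ x₃ x₄ ≤ F y₁ y₂ y₃ y₄) ∧
  (∀ x₁ x₂ x₃ x₄ : ℝ, 0 ≤ x₁ → 0 ≤ x₂ → 0 ≤ x₃ → 0 ≤ x₄ →
      x₁ * x₃ + x₂ * x₄ ≤ F x₁ x₂ x₃ x₄)

/-- An admissible triple `(F,G,H)`. -/
def AdmissibleTriple (F : ℝ → ℝ → ℝ → ℝ → ℝ) (G : ℝ → ℝ → ℝ → ℝ) (H : ℝ → ℝ → ℝ) : Prop :=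
  Admissible F ∧
  (∀ x y z x' y' z' : ℝ, 0 ≤ x → 0 ≤ y → 0 ≤ z → x ≤ x' → y ≤ y' → z ≤ z' →
      G x y z ≤ G x' y' z') ∧
  (∀ x y z : ℝ, 0 ≤ x → 0 ≤ y → 0 ≤ z → (x + y) * z ≤ G x y z) ∧
  (∀ x y x' y' : ℝ, 0 ≤ x → 0 ≤ y → x ≤ x' → y ≤ y' → H x y ≤ H x' y') ∧
  (∀ x y : ℝ, 0 ≤ x → 0 ≤ y → 2 * x * y ≤ H x y)

section ReIm

variable {A : Type*} [NormedRing A] [StarRing A] [NormedAlgebra ℂ A]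

/-- The real part `(a + a*)/2` of an element of a complex `*`-algebra. -/
def reEl (a : A) : A := (2⁻¹ : ℂ) • (a + star a)

/-- The imaginary part `(a - a*)/(2i)` of an element of a complex `*`-algebra. -/
def imEl (a : A) : A := ((2 * Complex.I)⁻¹ : ℂ) • (a - star a)

end ReIm

/-! ### States -/

/-- A state on a unital complex `*`-algebra: a linear functional which is unital
and positive. -/
structure CState (A : Type*) [NormedRing A] [StarRing A] [NormedAlgebra ℂ A] where
  toFun : A →ₗ[ℂ] ℂ
  map_one : toFun 1 = 1
  positive : ∀ a : A, 0 ≤ toFun (star a * a)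

/-- The topology induced by a distance function, generated by its open balls. -/
def ballTopology {X : Type*} (d : X → X → ℝ) : TopologicalSpace X :=
  TopologicalSpace.generateFrom {s | ∃ (x : X) (ε : ℝ), 0 < ε ∧ s = {y | d x y < ε}}

/-- The Hausdorff distance between two sets, relative to a distance function. -/
def hausDist {X : Type*} (d : X → X → ℝ) (S T : Set X) : ℝ :=
  max (sSup {r | ∃ x ∈ S, r = sInf {s | ∃ y ∈ T, s = d x y}})
      (sSup {r | ∃ y ∈ T, r = sInf {s | ∃ x ∈ S, s = d x y}})

/-- The diameter of a set relative to a distance function. -/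
def setDiam {X : Type*} (d : X → X → ℝ) (S : Set X) : ℝ :=
  sSup {r | ∃ x ∈ S, ∃ y ∈ S, r = d x y}

/-- The weak-* topology on the state space. -/
def stateWeakTopology (A : Type*) [NormedRing A] [StarRing A] [NormedAlgebra ℂ A] :
    TopologicalSpace (CState A) :=
  TopologicalSpace.induced (fun (φ : CState A) (a : A) => φ.toFun a) Pi.topologicalSpace

/-- The Monge-Kantorovich metric associated with a Lipschitz seminorm `L` with domain `dom`. -/
def mkDist {A : Type*} [NormedRing A] [StarRing A] [NormedAlgebra ℂ A]
    (dom : Set A) (L : A → ℝ) (φ ψ : CState A) : ℝ :=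
  sSup {r | ∃ a ∈ dom, L a ≤ 1 ∧ r = ‖φ.toFun a - ψ.toFun a‖}

/-- The 1-level set of a pivot is nonempty. -/
def pivotLevelNonempty {D : Type*} [NormedRing D] [StarRing D] [NormedAlgebra ℂ D]
    (x : D) : Prop :=
  ∃ φ : CState D,
    φ.toFun (star (1 - x) * (1 - x)) = 0 ∧ φ.toFun ((1 - x) * star (1 - x)) = 0

/-! ### Quasi-Leibniz quantum compact metric spaces -/

/-- An `F`-quasi-Leibniz quantum compact metric space structure on a unital C*-algebra `A`:
a Lipschitz seminorm `L` defined on a dense Jordan-Lie subalgebra `dom` of the self-adjoint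
part of `A`, vanishing exactly on `ℝ1`, lower semicontinuous, whose Monge-Kantorovich metric
metrizes the weak-* topology on the state space, and satisfying the `F`-quasi-Leibniz
inequality. -/
structure QLSpace (A : Type*) [NormedRing A] [StarRing A] [CStarRing A]
    [NormedAlgebra ℂ A] [StarModule ℂ A] [CompleteSpace A]
    (F : ℝ → ℝ → ℝ → ℝ → ℝ) where
  dom : Set A
  L : A → ℝ
  dom_selfAdjoint : ∀ a ∈ dom, IsSelfAdjoint a
  dom_dense : closure dom = {a : A | IsSelfAdjoint a}
  dom_add : ∀ a ∈ dom, ∀ b ∈ dom, a + b ∈ dom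
  dom_smul : ∀ (t : ℝ), ∀ a ∈ dom, (t : ℂ) • a ∈ dom
  dom_jordan : ∀ a ∈ dom, ∀ b ∈ dom, (2⁻¹ : ℂ) • (a * b + b * a) ∈ dom
  dom_lie : ∀ a ∈ dom, ∀ b ∈ dom, ((2 * Complex.I)⁻¹ : ℂ) • (a * b - b * a) ∈ dom
  one_mem : (1 : A) ∈ dom
  L_nonneg : ∀ a : A, 0 ≤ L a
  L_add : ∀ a ∈ dom, ∀ b ∈ dom, L (a + b) ≤ L a + L b
  L_smul : ∀ (t : ℝ), ∀ a ∈ dom, L ((t : ℂ) • a) = |t| * L a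
  L_eq_zero_iff : ∀ a ∈ dom, (L a = 0 ↔ ∃ t : ℝ, a = (t : ℂ) • (1 : A))
  lowerSemicontinuous : IsClosed {a : A | a ∈ dom ∧ L a ≤ 1}
  leibniz_jordan : ∀ a ∈ dom, ∀ b ∈ dom,
      L ((2⁻¹ : ℂ) • (a * b + b * a)) ≤ F ‖a‖ ‖b‖ (L a) (L b)
  leibniz_lie : ∀ a ∈ dom, ∀ b ∈ dom,
      L (((2 * Complex.I)⁻¹ : ℂ) • (a * b - b * a)) ≤ F ‖a‖ ‖b‖ (L a) (L b)
  mk_metrizes : ballTopology (mkDist dom L) = stateWeakTopology A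
/-! ### Metrized quantum vector bundles -/

/-- An `(F,G,H)`-metrized quantum vector bundle: a left Hilbert module `M` over a unital
C*-algebra `A` equipped with an `F`-quasi-Leibniz quantum compact metric space structure,
together with a D-norm `D` defined on a dense subspace `Ddom` of `M`, dominating the
C*-Hilbert norm, with compact unit ball, and satisfying the inner and modular quasi-Leibniz
inequalities with respect to `G` and `H`. -/
structure BundledMQVB (F : ℝ → ℝ → ℝ → ℝ → ℝ) (G : ℝ → ℝ → ℝ → ℝ) (H : ℝ → ℝ → ℝ) where
  A : Type
  [instRing : NormedRing A]
  [instStarRing : StarRing A]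
  [instCStar : CStarRing A]
  [instAlg : NormedAlgebra ℂ A]
  [instStarMod : StarModule ℂ A]
  [instComplete : CompleteSpace A]
  M : Type
  [instM : NormedAddCommGroup M]
  [instMC : Module ℂ M]
  [instMA : Module A M]
  [instTower : IsScalarTower ℂ A M]
  [instMComplete : CompleteSpace M]
  base : QLSpace A F
  inn : M → M → A
  Ddom : Set M
  D : M → ℝ
  inn_add_left : ∀ x y z : M, inn (x + y) z = inn x z + inn y z
  inn_smul_left : ∀ (a : A) (x y : M), inn (a • x) y = a * inn x y
  inn_smul_leftC : ∀ (c : ℂ) (x y : M), inn (c • x) y = c • inn x y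
  inn_star : ∀ x y : M, star (inn x y) = inn y x
  inn_pos : ∀ x : M, ∃ b : A, inn x x = star b * b
  inn_definite : ∀ x : M, inn x x = 0 → x = 0
  norm_eq : ∀ x : M, ‖x‖ = Real.sqrt ‖inn x x‖
  Ddom_dense : Dense Ddom
  Ddom_add : ∀ x ∈ Ddom, ∀ y ∈ Ddom, x + y ∈ Ddom
  Ddom_smul : ∀ (c : ℂ), ∀ x ∈ Ddom, c • x ∈ Ddom
  D_nonneg : ∀ x : M, 0 ≤ D x
  D_add : ∀ x ∈ Ddom, ∀ y ∈ Ddom, D (x + y) ≤ D x + D y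
  D_smul : ∀ (c : ℂ), ∀ x ∈ Ddom, D (c • x) = ‖c‖ * D x
  norm_le_D : ∀ x ∈ Ddom, ‖x‖ ≤ D x
  D_ball_compact : IsCompact {x : M | x ∈ Ddom ∧ D x ≤ 1}
  D_leibniz : ∀ a ∈ base.dom, ∀ x ∈ Ddom,
      a • x ∈ Ddom ∧ D (a • x) ≤ G ‖a‖ (base.L a) (D x)
  inn_leibniz : ∀ x ∈ Ddom, ∀ y ∈ Ddom,
      reEl (inn x y) ∈ base.dom ∧ imEl (inn x y) ∈ base.dom ∧
      base.L (reEl (inn x y)) ≤ H (D x) (D y) ∧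
      base.L (imEl (inn x y)) ≤ H (D x) (D y)

attribute [instance] BundledMQVB.instRing BundledMQVB.instStarRing BundledMQVB.instCStar
  BundledMQVB.instAlg BundledMQVB.instStarMod BundledMQVB.instComplete
  BundledMQVB.instM BundledMQVB.instMC BundledMQVB.instMA BundledMQVB.instTower
  BundledMQVB.instMComplete

variable {F : ℝ → ℝ → ℝ → ℝ → ℝ} {G : ℝ → ℝ → ℝ → ℝ} {H : ℝ → ℝ → ℝ}

/-- The closed ball of radius `r` for the D-norm of a metrized quantum vector bundle. -/
def BundledMQVB.Dball (Ω : BundledMQVB F G H) (r : ℝ) : Set Ω.M :=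
  {ω | ω ∈ Ω.Ddom ∧ Ω.D ω ≤ r}

/-- The modular Monge-Kantorovich metric of a metrized quantum vector bundle. -/
def BundledMQVB.mkD (Ω : BundledMQVB F G H) (x y : Ω.M) : ℝ :=
  sSup {r | ∃ ξ ∈ Ω.Ddom, Ω.D ξ ≤ 1 ∧ r = ‖Ω.inn x ξ - Ω.inn y ξ‖}

/-- The `A`-weak topology on the module of a metrized quantum vector bundle. -/
def BundledMQVB.aWeak (Ω : BundledMQVB F G H) : TopologicalSpace Ω.M :=
  TopologicalSpace.induced (fun (ω : Ω.M) (ξ : Ω.M) => Ω.inn ω ξ) Pi.topologicalSpace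
/-! ### Modular bridges -/

/-- A modular bridge between two metrized quantum vector bundles. -/
structure ModularBridge (ΩA ΩB : BundledMQVB F G H) where
  Dalg : Type
  [instDRing : NormedRing Dalg]
  [instDStarRing : StarRing Dalg]
  [instDCStar : CStarRing Dalg]
  [instDAlg : NormedAlgebra ℂ Dalg]
  [instDStarMod : StarModule ℂ Dalg]
  [instDComplete : CompleteSpace Dalg]
  J : Type
  [instJ : Nonempty J]
  pivot : Dalg
  piA : ΩA.A →⋆ₐ[ℂ] Dalg
  piB : ΩB.A →⋆ₐ[ℂ] Dalg
  piA_inj : Function.Injective piA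
  piB_inj : Function.Injective piB
  pivot_norm : ‖pivot‖ = 1
  levelSet_nonempty : pivotLevelNonempty pivot
  anchors : J → ΩA.M
  coanchors : J → ΩB.M
  anchors_mem : ∀ j, anchors j ∈ ΩA.Ddom
  anchors_le : ∀ j, ΩA.D (anchors j) ≤ 1
  coanchors_mem : ∀ j, coanchors j ∈ ΩB.Ddom
  coanchors_le : ∀ j, ΩB.D (coanchors j) ≤ 1

attribute [instance] ModularBridge.instDRing ModularBridge.instDStarRing
  ModularBridge.instDCStar ModularBridge.instDAlg ModularBridge.instDStarMod
  ModularBridge.instDComplete ModularBridge.instJ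

namespace ModularBridge

variable {ΩA ΩB : BundledMQVB F G H}

/-- The bridge seminorm of a modular bridge. -/
def bn (γ : ModularBridge ΩA ΩB) (a : ΩA.A) (b : ΩB.A) : ℝ :=
  ‖γ.piA a * γ.pivot - γ.pivot * γ.piB b‖

/-- The deck seminorm of a modular bridge. -/
def dn (γ : ModularBridge ΩA ΩB) (ω : ΩA.M) (η : ΩB.M) : ℝ :=
  ⨆ k : γ.J,
    max (γ.bn (ΩA.inn ω (γ.anchors k)) (ΩB.inn η (γ.coanchors k)))
        (γ.bn (ΩA.inn (γ.anchors k) ω) (ΩB.inn (γ.coanchors k) η))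

/-- The basic reach of a modular bridge. -/
def basicReach (γ : ModularBridge ΩA ΩB) : ℝ :=
  max
    (sSup {r | ∃ a ∈ ΩA.base.dom, ΩA.base.L a ≤ 1 ∧
        r = sInf {s | ∃ b ∈ ΩB.base.dom, ΩB.base.L b ≤ 1 ∧ s = γ.bn a b}})
    (sSup {r | ∃ b ∈ ΩB.base.dom, ΩB.base.L b ≤ 1 ∧
        r = sInf {s | ∃ a ∈ ΩA.base.dom, ΩA.base.L a ≤ 1 ∧ s = γ.bn a b}})

/-- The modular reach of a modular bridge. -/
def modularReach (γ : ModularBridge ΩA ΩB) : ℝ :=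
  ⨆ j : γ.J, γ.dn (γ.anchors j) (γ.coanchors j)

/-- The imprint of a modular bridge. -/
def imprint (γ : ModularBridge ΩA ΩB) : ℝ :=
  max (hausDist ΩA.mkD (Set.range γ.anchors) (ΩA.Dball 1))
      (hausDist ΩB.mkD (Set.range γ.coanchors) (ΩB.Dball 1))

/-- The reach of a modular bridge. -/
def reach (γ : ModularBridge ΩA ΩB) : ℝ :=
  max γ.basicReach (γ.modularReach + γ.imprint)

/-- The states of the bridge algebra in the 1-level set of the pivot. -/
def levelStates (γ : ModularBridge ΩA ΩB) : Set (CState γ.Dalg) :=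
  {φ | φ.toFun (star (1 - γ.pivot) * (1 - γ.pivot)) = 0 ∧
       φ.toFun ((1 - γ.pivot) * star (1 - γ.pivot)) = 0}

/-- The height of a modular bridge. -/
def height (γ : ModularBridge ΩA ΩB) : ℝ :=
  max
    (hausDist (mkDist ΩA.base.dom ΩA.base.L) (Set.univ : Set (CState ΩA.A))
      {ψ | ∃ φ ∈ γ.levelStates, ∀ a : ΩA.A, ψ.toFun a = φ.toFun (γ.piA a)})
    (hausDist (mkDist ΩB.base.dom ΩB.base.L) (Set.univ : Set (CState ΩB.A))
      {ψ | ∃ φ ∈ γ.levelStates, ∀ b : ΩB.A, ψ.toFun b = φ.toFun (γ.piB b)})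

/-- The length of a modular bridge. -/
def length (γ : ModularBridge ΩA ΩB) : ℝ := max γ.reach γ.height

/-- The `l`-modular target set of `ω` for a modular bridge. -/
def mtarget (γ : ModularBridge ΩA ΩB) (ω : ΩA.M) (l : ℝ) : Set ΩB.M :=
  {η | η ∈ ΩB.Ddom ∧ ΩB.D η ≤ l ∧ γ.dn ω η ≤ l * γ.reach}

/-- The `l`-target set of `a` for a modular bridge. -/
def atarget (γ : ModularBridge ΩA ΩB) (a : ΩA.A) (l : ℝ) : Set ΩB.A :=
  {b | b ∈ ΩB.base.dom ∧ ΩB.base.L b ≤ l ∧ γ.bn a b ≤ l * γ.basicReach}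

/-- The reverse of a modular bridge. -/
def reverse (γ : ModularBridge ΩA ΩB) : ModularBridge ΩB ΩA where
  Dalg := γ.Dalg
  J := γ.J
  pivot := star γ.pivot
  piA := γ.piB
  piB := γ.piA
  piA_inj := γ.piB_inj
  piB_inj := γ.piA_inj
  pivot_norm := by rw [norm_star]; exact γ.pivot_norm
  levelSet_nonempty := by
    obtain ⟨φ, h1, h2⟩ := γ.levelSet_nonempty
    refine ⟨φ, ?_, ?_⟩
    · have e1 : star ((1 : γ.Dalg) - star γ.pivot) = 1 - γ.pivot := by
        simp [star_sub]
      have e2 : (1 : γ.Dalg) - star γ.pivot = star (1 - γ.pivot) := by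
        simp [star_sub]
      rw [e1, e2]; exact h2
    · have e1 : star ((1 : γ.Dalg) - star γ.pivot) = 1 - γ.pivot := by
        simp [star_sub]
      have e2 : (1 : γ.Dalg) - star γ.pivot = star (1 - γ.pivot) := by
        simp [star_sub]
      rw [e1, e2]; exact h1
  anchors := γ.coanchors
  coanchors := γ.anchors
  anchors_mem := γ.coanchors_mem
  anchors_le := γ.coanchors_le
  coanchors_mem := γ.anchors_mem
  coanchors_le := γ.anchors_le

end ModularBridge

/-! ### Modular treks -/

/-- A modular trek: a finite chain of composable modular bridges. -/
inductive Trek (F : ℝ → ℝ → ℝ → ℝ → ℝ) (G : ℝ → ℝ → ℝ → ℝ) (H : ℝ → ℝ → ℝ) :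
    BundledMQVB F G H → BundledMQVB F G H → Type 1
  | single {ΩA ΩB : BundledMQVB F G H} (γ : ModularBridge ΩA ΩB) : Trek F G H ΩA ΩB
  | cons {ΩA ΩB ΩC : BundledMQVB F G H} (γ : ModularBridge ΩA ΩB)
      (Γ : Trek F G H ΩB ΩC) : Trek F G H ΩA ΩC

namespace Trek

/-- The length of a modular trek: the sum of the lengths of its bridges. -/
def length : ∀ {ΩA ΩB : BundledMQVB F G H}, Trek F G H ΩA ΩB → ℝ
  | _, _, .single γ => γ.length
  | _, _, .cons γ Γ => γ.length + Trek.length Γ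

/-- The modular target set of a modular trek (the set of endpoints of `l`-itineraries). -/
def mtarget : ∀ {ΩA ΩB : BundledMQVB F G H}, Trek F G H ΩA ΩB → ΩA.M → ℝ → Set ΩB.M
  | _, _, .single γ, ω, l => γ.mtarget ω l
  | _, _, .cons γ Γ, ω, l => {η | ∃ ξ ∈ γ.mtarget ω l, η ∈ Trek.mtarget Γ ξ l}

/-- The target set of a modular trek on the base algebras. -/
def atarget : ∀ {ΩA ΩB : BundledMQVB F G H}, Trek F G H ΩA ΩB → ΩA.A → ℝ → Set ΩB.A
  | _, _, .single γ, a, l => γ.atarget a l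
  | _, _, .cons γ Γ, a, l => {b | ∃ c ∈ γ.atarget a l, b ∈ Trek.atarget Γ c l}

end Trek



instance (Ω : BundledMQVB F G H) : CStarAlgebra Ω.A :=
  { Ω.instRing, Ω.instStarRing, Ω.instCStar, Ω.instAlg, Ω.instStarMod, Ω.instComplete with }

instance {ΩA ΩB : BundledMQVB F G H} (γ : ModularBridge ΩA ΩB) : CStarAlgebra γ.Dalg :=
  { γ.instDRing, γ.instDStarRing, γ.instDCStar, γ.instDAlg, γ.instDStarMod, γ.instDComplete with }

namespace BundledMQVB
variable (Ω : BundledMQVB F G H)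

lemma inn_add_right (x y z : Ω.M) : Ω.inn x (y + z) = Ω.inn x y + Ω.inn x z := by
  rw [← Ω.inn_star (y + z) x, Ω.inn_add_left, star_add, Ω.inn_star, Ω.inn_star]

lemma inn_smul_right (c : ℂ) (x y : Ω.M) :
    Ω.inn x (c • y) = (starRingEnd ℂ) c • Ω.inn x y := by
  rw [← Ω.inn_star (c • y) x, Ω.inn_smul_leftC, star_smul, Ω.inn_star]
  rfl

lemma inn_zero_left (y : Ω.M) : Ω.inn 0 y = 0 := by
  have := Ω.inn_add_left 0 0 y
  simpa using this.symm

lemma inn_zero_right (x : Ω.M) : Ω.inn x 0 = 0 := by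
  rw [← Ω.inn_star, inn_zero_left, star_zero]

lemma inn_sub_left (x y z : Ω.M) : Ω.inn (x - y) z = Ω.inn x z - Ω.inn y z := by
  have h : Ω.inn (x - y) z + Ω.inn y z = Ω.inn x z := by
    rw [← Ω.inn_add_left, sub_add_cancel]
  linear_combination (norm := abel) h

lemma inn_sub_right (x y z : Ω.M) : Ω.inn x (y - z) = Ω.inn x y - Ω.inn x z := by
  rw [← Ω.inn_star (y - z) x, Ω.inn_sub_left, star_sub, Ω.inn_star, Ω.inn_star]

lemma inn_neg_left (x y : Ω.M) : Ω.inn (-x) y = - Ω.inn x y := by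
  have := Ω.inn_sub_left 0 x y
  simpa [inn_zero_left] using this

lemma norm_inn_self (x : Ω.M) : ‖Ω.inn x x‖ = ‖x‖ ^ 2 := by
  rw [Ω.norm_eq x, sq, Real.mul_self_sqrt (norm_nonneg _)]

/-- The norm on the module is `ℂ`-homogeneous. -/
lemma norm_smulC (c : ℂ) (x : Ω.M) : ‖c • x‖ = ‖c‖ * ‖x‖ := by
  have h : Ω.inn (c • x) (c • x) = (c * (starRingEnd ℂ) c) • Ω.inn x x := by
    rw [Ω.inn_smul_leftC, Ω.inn_smul_right, smul_smul]
  have hc : c * (starRingEnd ℂ) c = ((‖c‖ ^ 2 : ℝ) : ℂ) := by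
    rw [Complex.mul_conj]
    norm_cast
    rw [Complex.normSq_eq_norm_sq]
  rw [Ω.norm_eq, h, hc, norm_smul, Complex.norm_real, Real.norm_eq_abs,
    abs_of_nonneg (sq_nonneg _), Real.sqrt_mul (sq_nonneg _),
    Real.sqrt_sq (norm_nonneg _), Ω.norm_eq x]

/-- Polarization identity. -/
lemma inn_polar (x y : Ω.M) :
    (4 : ℂ) • Ω.inn x y =
      Ω.inn (x + y) (x + y) - Ω.inn (x - y) (x - y)
      + Complex.I • Ω.inn (x + Complex.I • y) (x + Complex.I • y)
      - Complex.I • Ω.inn (x - Complex.I • y) (x - Complex.I • y) := by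
  have h1 : Ω.inn (x + y) (x + y) = Ω.inn x x + Ω.inn x y + Ω.inn y x + Ω.inn y y := by
    rw [Ω.inn_add_left, Ω.inn_add_right, Ω.inn_add_right]; abel
  have h2 : Ω.inn (x - y) (x - y) = Ω.inn x x - Ω.inn x y - Ω.inn y x + Ω.inn y y := by
    rw [Ω.inn_sub_left, Ω.inn_sub_right, Ω.inn_sub_right]; abel
  have h3 : Ω.inn (x + Complex.I • y) (x + Complex.I • y)
      = Ω.inn x x + (-Complex.I) • Ω.inn x y + Complex.I • Ω.inn y x + Ω.inn y y := by
    rw [Ω.inn_add_left, Ω.inn_add_right, Ω.inn_add_right, Ω.inn_smul_leftC,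
      Ω.inn_smul_right, Ω.inn_smul_leftC, Ω.inn_smul_right, Complex.conj_I, smul_smul,
      mul_neg, Complex.I_mul_I, neg_neg, one_smul]
    abel
  have h4 : Ω.inn (x - Complex.I • y) (x - Complex.I • y)
      = Ω.inn x x + Complex.I • Ω.inn x y + (-Complex.I) • Ω.inn y x + Ω.inn y y := by
    rw [Ω.inn_sub_left, Ω.inn_sub_right, Ω.inn_sub_right, Ω.inn_smul_leftC,
      Ω.inn_smul_right, Ω.inn_smul_leftC, Ω.inn_smul_right, Complex.conj_I, smul_smul,
      mul_neg, Complex.I_mul_I, neg_neg, one_smul]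
    simp only [neg_smul, smul_neg]
    abel
  rw [h1, h2, h3, h4]
  simp only [smul_add, smul_sub, smul_smul, mul_neg, Complex.I_mul_I, neg_neg,
    neg_smul, one_smul]
  match_scalars <;> simp [Complex.I_sq] <;> ring

lemma norm_inn_le_of_le_one (x y : Ω.M) (hx : ‖x‖ ≤ 1) (hy : ‖y‖ ≤ 1) :
    ‖Ω.inn x y‖ ≤ 4 := by
  have h4 : ‖(4:ℂ) • Ω.inn x y‖ = 4 * ‖Ω.inn x y‖ := by
    rw [norm_smul]; norm_num
  have hb : ∀ z : Ω.M, ‖z‖ ≤ 2 → ‖Ω.inn z z‖ ≤ 4 := by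
    intro z hz
    rw [Ω.norm_inn_self]; nlinarith [norm_nonneg z]
  have hIy : ‖(Complex.I • y : Ω.M)‖ = ‖y‖ := by
    rw [Ω.norm_smulC, Complex.norm_I, one_mul]
  have h1 : ‖Ω.inn (x + y) (x + y)‖ ≤ 4 := hb _ ((norm_add_le _ _).trans (by linarith))
  have h2 : ‖Ω.inn (x - y) (x - y)‖ ≤ 4 := hb _ ((norm_sub_le _ _).trans (by linarith))
  have h3 : ‖Ω.inn (x + Complex.I • y) (x + Complex.I • y)‖ ≤ 4 :=
    hb _ ((norm_add_le _ _).trans (by rw [hIy]; linarith))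
  have h5 : ‖Ω.inn (x - Complex.I • y) (x - Complex.I • y)‖ ≤ 4 :=
    hb _ ((norm_sub_le _ _).trans (by rw [hIy]; linarith))
  have hkey : ‖(4:ℂ) • Ω.inn x y‖ ≤ 16 := by
    rw [Ω.inn_polar x y]
    have n3 : ‖Complex.I • Ω.inn (x + Complex.I • y) (x + Complex.I • y)‖ ≤ 4 := by
      rw [norm_smul, Complex.norm_I, one_mul]; exact h3
    have n5 : ‖Complex.I • Ω.inn (x - Complex.I • y) (x - Complex.I • y)‖ ≤ 4 := by
      rw [norm_smul, Complex.norm_I, one_mul]; exact h5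
    calc ‖_ - _ + _ - _‖ ≤ ‖_ - _ + _‖ + ‖_‖ := norm_sub_le _ _
      _ ≤ (‖_ - _‖ + ‖_‖) + ‖_‖ := by gcongr; exact norm_add_le _ _
      _ ≤ ((‖_‖ + ‖_‖) + ‖_‖) + ‖_‖ := by gcongr; exact norm_sub_le _ _
      _ ≤ 16 := by linarith
  rw [h4] at hkey; linarith

lemma norm_inn_le (x y : Ω.M) : ‖Ω.inn x y‖ ≤ 4 * ‖x‖ * ‖y‖ := by
  rcases eq_or_ne x 0 with rfl | hx
  · simp [Ω.inn_zero_left]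
  rcases eq_or_ne y 0 with rfl | hy
  · simp [Ω.inn_zero_right]
  have hxn : (0:ℝ) < ‖x‖ := norm_pos_iff.mpr hx
  have hyn : (0:ℝ) < ‖y‖ := norm_pos_iff.mpr hy
  have key : Ω.inn x y = ((‖x‖ : ℂ) * (‖y‖ : ℂ)) •
      Ω.inn (((‖x‖⁻¹ : ℝ) : ℂ) • x) (((‖y‖⁻¹ : ℝ) : ℂ) • y) := by
    rw [Ω.inn_smul_leftC, Ω.inn_smul_right, Complex.conj_ofReal, smul_smul, smul_smul]
    have hc : ((‖x‖:ℂ) * ↑‖y‖ * ↑‖x‖⁻¹ * ↑‖y‖⁻¹) = 1 := by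
      push_cast; field_simp
    rw [hc, one_smul]
  have h1 : ‖(((‖x‖⁻¹ : ℝ) : ℂ) • x : Ω.M)‖ ≤ 1 := by
    rw [Ω.norm_smulC, Complex.norm_real, Real.norm_eq_abs, abs_of_pos (by positivity),
      inv_mul_le_iff₀ hxn]
    simp
  have h2 : ‖(((‖y‖⁻¹ : ℝ) : ℂ) • y : Ω.M)‖ ≤ 1 := by
    rw [Ω.norm_smulC, Complex.norm_real, Real.norm_eq_abs, abs_of_pos (by positivity),
      inv_mul_le_iff₀ hyn]
    simp
  rw [key, norm_smul]
  have hn : ‖(‖x‖ : ℂ) * (‖y‖ : ℂ)‖ = ‖x‖ * ‖y‖ := by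
    rw [norm_mul, Complex.norm_real, Complex.norm_real, Real.norm_eq_abs,
      Real.norm_eq_abs, abs_of_nonneg (norm_nonneg _), abs_of_nonneg (norm_nonneg _)]
  rw [hn]
  calc ‖x‖ * ‖y‖ * ‖Ω.inn _ _‖ ≤ ‖x‖ * ‖y‖ * 4 :=
        mul_le_mul_of_nonneg_left (Ω.norm_inn_le_of_le_one _ _ h1 h2) (by positivity)
  _ = 4 * ‖x‖ * ‖y‖ := by ring

lemma zero_mem_Ddom : (0 : Ω.M) ∈ Ω.Ddom := by
  obtain ⟨m, hm⟩ := Ω.Ddom_dense.nonempty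
  simpa using Ω.Ddom_smul 0 m hm

lemma D_zero : Ω.D 0 = 0 := by
  obtain ⟨m, hm⟩ := Ω.Ddom_dense.nonempty
  have := Ω.D_smul 0 m hm
  simpa using this

lemma continuous_smulC (c : ℂ) : Continuous (fun z : Ω.M => c • z) := by
  apply (LipschitzWith.of_dist_le_mul (K := ‖c‖₊) ?_).continuous
  intro a b
  rw [dist_eq_norm, dist_eq_norm, ← smul_sub, Ω.norm_smulC]
  rfl

lemma continuous_inn_left (ξ : Ω.M) : Continuous (fun z : Ω.M => Ω.inn z ξ) := by
  apply AddMonoidHomClass.continuous_of_bound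
    (AddMonoidHom.mk' (fun z : Ω.M => Ω.inn z ξ) (fun a b => Ω.inn_add_left a b ξ))
    (4 * ‖ξ‖)
  intro z
  calc ‖Ω.inn z ξ‖ ≤ 4 * ‖z‖ * ‖ξ‖ := Ω.norm_inn_le z ξ
  _ = 4 * ‖ξ‖ * ‖z‖ := by ring

lemma isCompact_Dball {l : ℝ} (hl : 0 ≤ l) : IsCompact (Ω.Dball l) := by
  rcases hl.eq_or_lt with rfl | hl
  · have : Ω.Dball 0 = {0} := by
      ext η
      constructor
      · rintro ⟨h1, h2⟩
        have := Ω.norm_le_D η h1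
        have : ‖η‖ ≤ 0 := by linarith
        simpa using le_antisymm this (norm_nonneg η)
      · rintro rfl
        exact ⟨Ω.zero_mem_Ddom, le_of_eq Ω.D_zero⟩
    rw [this]; exact isCompact_singleton
  · have himg : Ω.Dball l = (fun z : Ω.M => ((l : ℂ)) • z) '' (Ω.Dball 1) := by
      have hln : ‖(l : ℂ)‖ = l := by
        rw [Complex.norm_real, Real.norm_eq_abs, abs_of_pos hl]
      ext η
      constructor
      · rintro ⟨h1, h2⟩
        refine ⟨((l⁻¹ : ℝ) : ℂ) • η, ⟨Ω.Ddom_smul _ η h1, ?_⟩, ?_⟩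
        · rw [Ω.D_smul _ η h1, Complex.norm_real, Real.norm_eq_abs,
            abs_of_pos (by positivity), inv_mul_le_iff₀ hl]
          simpa using h2
        · show (l : ℂ) • ((l⁻¹ : ℝ) : ℂ) • η = η
          rw [smul_smul]
          have hc : (l : ℂ) * ((l⁻¹ : ℝ) : ℂ) = 1 := by push_cast; field_simp
          rw [hc, one_smul]
      · rintro ⟨ξ, ⟨h1, h2⟩, rfl⟩
        refine ⟨Ω.Ddom_smul _ ξ h1, ?_⟩
        rw [Ω.D_smul _ ξ h1, hln]
        calc l * Ω.D ξ ≤ l * 1 := by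
              exact mul_le_mul_of_nonneg_left h2 hl.le
        _ = l := mul_one l
    rw [himg]
    exact (Ω.D_ball_compact).image (Ω.continuous_smulC _)

/-- Elements of the defining set of `mkD` are bounded. -/
lemma le_mkD {ξ : Ω.M} (hξ : ξ ∈ Ω.Ddom) (hD : Ω.D ξ ≤ 1) (x y : Ω.M) :
    ‖Ω.inn x ξ - Ω.inn y ξ‖ ≤ Ω.mkD x y := by
  apply le_csSup
  · refine ⟨4 * ‖x - y‖, ?_⟩
    rintro r ⟨ζ, hζ, hζD, rfl⟩
    have h1 : ‖ζ‖ ≤ 1 := (Ω.norm_le_D ζ hζ).trans hζD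
    calc ‖Ω.inn x ζ - Ω.inn y ζ‖ = ‖Ω.inn (x - y) ζ‖ := by rw [Ω.inn_sub_left]
    _ ≤ 4 * ‖x - y‖ * ‖ζ‖ := Ω.norm_inn_le _ _
    _ ≤ 4 * ‖x - y‖ * 1 := by
        exact mul_le_mul_of_nonneg_left h1 (by positivity)
    _ = 4 * ‖x - y‖ := mul_one _
  · exact ⟨ξ, hξ, hD, rfl⟩

lemma mkD_nonneg (x y : Ω.M) : 0 ≤ Ω.mkD x y := by
  have := Ω.le_mkD Ω.zero_mem_Ddom (le_of_eq Ω.D_zero |>.trans zero_le_one) x y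
  exact le_trans (norm_nonneg _) this

lemma mkD_le (x y : Ω.M) : Ω.mkD x y ≤ 4 * ‖x - y‖ := by
  have hmem : (0:ℝ) ∈ {r | ∃ ξ ∈ Ω.Ddom, Ω.D ξ ≤ 1 ∧ r = ‖Ω.inn x ξ - Ω.inn y ξ‖} :=
    ⟨0, Ω.zero_mem_Ddom, (le_of_eq Ω.D_zero).trans zero_le_one, by
      rw [Ω.inn_zero_right, Ω.inn_zero_right, sub_zero, norm_zero]⟩
  apply csSup_le ⟨0, hmem⟩
  rintro r ⟨ζ, hζ, hζD, rfl⟩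
  have h1 : ‖ζ‖ ≤ 1 := (Ω.norm_le_D ζ hζ).trans hζD
  calc ‖Ω.inn x ζ - Ω.inn y ζ‖ = ‖Ω.inn (x - y) ζ‖ := by rw [Ω.inn_sub_left]
  _ ≤ 4 * ‖x - y‖ * ‖ζ‖ := Ω.norm_inn_le _ _
  _ ≤ 4 * ‖x - y‖ * 1 := mul_le_mul_of_nonneg_left h1 (by positivity)
  _ = 4 * ‖x - y‖ := mul_one _

end BundledMQVB


namespace ModularBridge
variable {ΩA ΩB : BundledMQVB F G H} (γ : ModularBridge ΩA ΩB)

lemma norm_piA (a : ΩA.A) : ‖γ.piA a‖ ≤ ‖a‖ := NonUnitalStarAlgHom.norm_apply_le γ.piA a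
lemma norm_piB (b : ΩB.A) : ‖γ.piB b‖ ≤ ‖b‖ := NonUnitalStarAlgHom.norm_apply_le γ.piB b

lemma bn_nonneg (a : ΩA.A) (b : ΩB.A) : 0 ≤ γ.bn a b := norm_nonneg _

lemma bn_le (a : ΩA.A) (b : ΩB.A) : γ.bn a b ≤ ‖a‖ + ‖b‖ := by
  unfold bn
  calc ‖γ.piA a * γ.pivot - γ.pivot * γ.piB b‖
      ≤ ‖γ.piA a * γ.pivot‖ + ‖γ.pivot * γ.piB b‖ := norm_sub_le _ _
  _ ≤ ‖γ.piA a‖ * ‖γ.pivot‖ + ‖γ.pivot‖ * ‖γ.piB b‖ := by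
      gcongr <;> [exact norm_mul_le _ _; exact norm_mul_le _ _]
  _ ≤ ‖a‖ + ‖b‖ := by
      rw [γ.pivot_norm, mul_one, one_mul]
      gcongr <;> [exact γ.norm_piA a; exact γ.norm_piB b]

lemma bn_triangle_left (a a' : ΩA.A) (b : ΩB.A) :
    γ.bn a b ≤ ‖a - a'‖ + γ.bn a' b := by
  unfold bn
  have hsplit : γ.piA a * γ.pivot - γ.pivot * γ.piB b
      = γ.piA (a - a') * γ.pivot + (γ.piA a' * γ.pivot - γ.pivot * γ.piB b) := by
    rw [map_sub, sub_mul]; abel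
  rw [hsplit]
  calc ‖_ + _‖ ≤ ‖γ.piA (a - a') * γ.pivot‖ + ‖γ.piA a' * γ.pivot - γ.pivot * γ.piB b‖ :=
        norm_add_le _ _
  _ ≤ ‖a - a'‖ + ‖γ.piA a' * γ.pivot - γ.pivot * γ.piB b‖ := by
      gcongr
      calc ‖γ.piA (a - a') * γ.pivot‖ ≤ ‖γ.piA (a - a')‖ * ‖γ.pivot‖ := norm_mul_le _ _
      _ ≤ ‖a - a'‖ := by rw [γ.pivot_norm, mul_one]; exact γ.norm_piA _

lemma bn_smul_real {l : ℝ} (hl : 0 ≤ l) (a : ΩA.A) (b : ΩB.A) :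
    γ.bn ((l : ℂ) • a) ((l : ℂ) • b) = l * γ.bn a b := by
  unfold bn
  rw [map_smul, map_smul, smul_mul_assoc, mul_smul_comm, ← smul_sub, norm_smul,
    Complex.norm_real, Real.norm_eq_abs, abs_of_nonneg hl]

/-- Uniform bound on the deck seminorm terms. -/
lemma dn_term_le (ω : ΩA.M) (η : ΩB.M) (k : γ.J) :
    max (γ.bn (ΩA.inn ω (γ.anchors k)) (ΩB.inn η (γ.coanchors k)))
        (γ.bn (ΩA.inn (γ.anchors k) ω) (ΩB.inn (γ.coanchors k) η))
      ≤ 4 * ‖ω‖ + 4 * ‖η‖ := by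
  have hak : ‖γ.anchors k‖ ≤ 1 :=
    (ΩA.norm_le_D _ (γ.anchors_mem k)).trans (γ.anchors_le k)
  have hck : ‖γ.coanchors k‖ ≤ 1 :=
    (ΩB.norm_le_D _ (γ.coanchors_mem k)).trans (γ.coanchors_le k)
  have b1 : γ.bn (ΩA.inn ω (γ.anchors k)) (ΩB.inn η (γ.coanchors k)) ≤ 4 * ‖ω‖ + 4 * ‖η‖ := by
    refine (γ.bn_le _ _).trans ?_
    have h1 : ‖ΩA.inn ω (γ.anchors k)‖ ≤ 4 * ‖ω‖ := by
      calc ‖ΩA.inn ω (γ.anchors k)‖ ≤ 4 * ‖ω‖ * ‖γ.anchors k‖ := ΩA.norm_inn_le _ _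
      _ ≤ 4 * ‖ω‖ * 1 := mul_le_mul_of_nonneg_left hak (by positivity)
      _ = 4 * ‖ω‖ := mul_one _
    have h2 : ‖ΩB.inn η (γ.coanchors k)‖ ≤ 4 * ‖η‖ := by
      calc ‖ΩB.inn η (γ.coanchors k)‖ ≤ 4 * ‖η‖ * ‖γ.coanchors k‖ := ΩB.norm_inn_le _ _
      _ ≤ 4 * ‖η‖ * 1 := mul_le_mul_of_nonneg_left hck (by positivity)
      _ = 4 * ‖η‖ := mul_one _
    linarith
  have b2 : γ.bn (ΩA.inn (γ.anchors k) ω) (ΩB.inn (γ.coanchors k) η) ≤ 4 * ‖ω‖ + 4 * ‖η‖ := by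
    have h1 : ‖ΩA.inn (γ.anchors k) ω‖ ≤ 4 * ‖ω‖ := by
      calc ‖ΩA.inn (γ.anchors k) ω‖ ≤ 4 * ‖γ.anchors k‖ * ‖ω‖ := ΩA.norm_inn_le _ _
      _ ≤ 4 * 1 * ‖ω‖ := by gcongr
      _ = 4 * ‖ω‖ := by ring
    have h2 : ‖ΩB.inn (γ.coanchors k) η‖ ≤ 4 * ‖η‖ := by
      calc ‖ΩB.inn (γ.coanchors k) η‖ ≤ 4 * ‖γ.coanchors k‖ * ‖η‖ := ΩB.norm_inn_le _ _
      _ ≤ 4 * 1 * ‖η‖ := by gcongr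
      _ = 4 * ‖η‖ := by ring
    refine (γ.bn_le _ _).trans (by linarith)
  exact max_le b1 b2

lemma dn_bddAbove (ω : ΩA.M) (η : ΩB.M) :
    BddAbove (Set.range fun k : γ.J =>
      max (γ.bn (ΩA.inn ω (γ.anchors k)) (ΩB.inn η (γ.coanchors k)))
          (γ.bn (ΩA.inn (γ.anchors k) ω) (ΩB.inn (γ.coanchors k) η))) := by
  refine ⟨4 * ‖ω‖ + 4 * ‖η‖, ?_⟩
  rintro r ⟨k, rfl⟩
  exact γ.dn_term_le ω η k

lemma le_dn (ω : ΩA.M) (η : ΩB.M) (k : γ.J) :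
    max (γ.bn (ΩA.inn ω (γ.anchors k)) (ΩB.inn η (γ.coanchors k)))
        (γ.bn (ΩA.inn (γ.anchors k) ω) (ΩB.inn (γ.coanchors k) η)) ≤ γ.dn ω η :=
  le_ciSup (γ.dn_bddAbove ω η) k

lemma dn_le {c : ℝ} (ω : ΩA.M) (η : ΩB.M)
    (h : ∀ k : γ.J,
      max (γ.bn (ΩA.inn ω (γ.anchors k)) (ΩB.inn η (γ.coanchors k)))
          (γ.bn (ΩA.inn (γ.anchors k) ω) (ΩB.inn (γ.coanchors k) η)) ≤ c) :
    γ.dn ω η ≤ c :=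
  ciSup_le h

lemma dn_nonneg (ω : ΩA.M) (η : ΩB.M) : 0 ≤ γ.dn ω η := by
  obtain ⟨k⟩ := γ.instJ
  exact le_trans (le_max_of_le_left (γ.bn_nonneg _ _)) (γ.le_dn ω η k)

lemma dn_anchors_le_modularReach (j : γ.J) :
    γ.dn (γ.anchors j) (γ.coanchors j) ≤ γ.modularReach := by
  apply le_ciSup (f := fun j => γ.dn (γ.anchors j) (γ.coanchors j))
  refine ⟨8, ?_⟩
  rintro r ⟨i, rfl⟩
  refine γ.dn_le _ _ fun k => (γ.dn_term_le _ _ k).trans ?_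
  have h1 : ‖γ.anchors i‖ ≤ 1 := (ΩA.norm_le_D _ (γ.anchors_mem i)).trans (γ.anchors_le i)
  have h2 : ‖γ.coanchors i‖ ≤ 1 := (ΩB.norm_le_D _ (γ.coanchors_mem i)).trans (γ.coanchors_le i)
  linarith

lemma modularReach_add_imprint_le_reach :
    γ.modularReach + γ.imprint ≤ γ.reach := le_max_right _ _

end ModularBridge


namespace ModularBridge
variable {ΩA ΩB : BundledMQVB F G H} (γ : ModularBridge ΩA ΩB)

lemma continuous_piA : Continuous γ.piA := by
  apply AddMonoidHomClass.continuous_of_bound γ.piA 1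
  intro a; rw [one_mul]; exact γ.norm_piA a

lemma continuous_piB : Continuous γ.piB := by
  apply AddMonoidHomClass.continuous_of_bound γ.piB 1
  intro b; rw [one_mul]; exact γ.norm_piB b

lemma continuous_bn_term (k : γ.J) :
    Continuous (fun p : ΩA.M × ΩB.M =>
      γ.bn (ΩA.inn p.1 (γ.anchors k)) (ΩB.inn p.2 (γ.coanchors k))) := by
  unfold bn
  apply Continuous.norm
  exact ((((γ.continuous_piA.comp (ΩA.continuous_inn_left (γ.anchors k))).comp
      continuous_fst).mul continuous_const).sub
    (continuous_const.mul ((γ.continuous_piB.comp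
      (ΩB.continuous_inn_left (γ.coanchors k))).comp continuous_snd)))

lemma continuous_bn_term' (k : γ.J) :
    Continuous (fun p : ΩA.M × ΩB.M =>
      γ.bn (ΩA.inn (γ.anchors k) p.1) (ΩB.inn (γ.coanchors k) p.2)) := by
  unfold bn
  apply Continuous.norm
  have cA : Continuous (fun z : ΩA.M => ΩA.inn (γ.anchors k) z) := by
    have : (fun z : ΩA.M => ΩA.inn (γ.anchors k) z)
        = (fun z : ΩA.M => star (ΩA.inn z (γ.anchors k))) := by
      funext z; rw [ΩA.inn_star]
    rw [this]
    exact (ΩA.continuous_inn_left (γ.anchors k)).star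
  have cB : Continuous (fun z : ΩB.M => ΩB.inn (γ.coanchors k) z) := by
    have : (fun z : ΩB.M => ΩB.inn (γ.coanchors k) z)
        = (fun z : ΩB.M => star (ΩB.inn z (γ.coanchors k))) := by
      funext z; rw [ΩB.inn_star]
    rw [this]
    exact (ΩB.continuous_inn_left (γ.coanchors k)).star
  exact ((((γ.continuous_piA.comp cA).comp continuous_fst).mul continuous_const).sub
    (continuous_const.mul ((γ.continuous_piB.comp cB).comp continuous_snd)))

lemma isClosed_dn_le (c : ℝ) : IsClosed {p : ΩA.M × ΩB.M | γ.dn p.1 p.2 ≤ c} := by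
  have hset : {p : ΩA.M × ΩB.M | γ.dn p.1 p.2 ≤ c}
      = ⋂ k : γ.J, ({p : ΩA.M × ΩB.M |
          γ.bn (ΩA.inn p.1 (γ.anchors k)) (ΩB.inn p.2 (γ.coanchors k)) ≤ c}
        ∩ {p : ΩA.M × ΩB.M |
          γ.bn (ΩA.inn (γ.anchors k) p.1) (ΩB.inn (γ.coanchors k) p.2) ≤ c}) := by
    ext p
    simp only [Set.mem_setOf_eq, Set.mem_iInter, Set.mem_inter_iff]
    constructor
    · intro h k
      have := (γ.le_dn p.1 p.2 k).trans h
      exact ⟨(le_max_left _ _).trans this, (le_max_right _ _).trans this⟩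
    · intro h
      exact γ.dn_le _ _ fun k => max_le (h k).1 (h k).2
  rw [hset]
  exact isClosed_iInter fun k =>
    (isClosed_le (γ.continuous_bn_term k) continuous_const).inter
      (isClosed_le (γ.continuous_bn_term' k) continuous_const)

lemma mtarget_subset (ω : ΩA.M) (l : ℝ) : γ.mtarget ω l ⊆ ΩB.Dball l :=
  fun η hη => ⟨hη.1, hη.2.1⟩

lemma isClosed_rel {l : ℝ} (hl : 0 ≤ l) :
    IsClosed {p : ΩA.M × ΩB.M | p.2 ∈ γ.mtarget p.1 l} := by
  have hset : {p : ΩA.M × ΩB.M | p.2 ∈ γ.mtarget p.1 l}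
      = (Prod.snd ⁻¹' (ΩB.Dball l)) ∩ {p : ΩA.M × ΩB.M | γ.dn p.1 p.2 ≤ l * γ.reach} := by
    ext p
    simp only [Set.mem_setOf_eq, Set.mem_inter_iff, Set.mem_preimage]
    constructor
    · rintro ⟨h1, h2, h3⟩; exact ⟨⟨h1, h2⟩, h3⟩
    · rintro ⟨⟨h1, h2⟩, h3⟩; exact ⟨h1, h2, h3⟩
  rw [hset]
  exact ((ΩB.isCompact_Dball hl).isClosed.preimage continuous_snd).inter (γ.isClosed_dn_le _)

end ModularBridge


namespace ModularBridge
variable {ΩA ΩB : BundledMQVB F G H} (γ : ModularBridge ΩA ΩB)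

lemma exists_approx (ω : ΩA.M) (hω : ω ∈ ΩA.Ddom) {l : ℝ} (hl : ΩA.D ω ≤ l)
    (hlpos : 0 < l) {ε : ℝ} (hε : 0 < ε) :
    ∃ η, η ∈ ΩB.Ddom ∧ ΩB.D η ≤ l ∧ γ.dn ω η ≤ l * γ.reach + l * ε := by
  classical
  set ω' : ΩA.M := ((l⁻¹ : ℝ) : ℂ) • ω with hω'def
  have hω' : ω' ∈ ΩA.Ddom := ΩA.Ddom_smul _ ω hω
  have hDω' : ΩA.D ω' ≤ 1 := by
    rw [hω'def, ΩA.D_smul _ ω hω, Complex.norm_real, Real.norm_eq_abs,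
      abs_of_pos (by positivity), inv_mul_le_iff₀ hlpos]
    simpa using hl
  have hres : (l : ℂ) • ω' = ω := by
    rw [hω'def, smul_smul]
    have hc : (l : ℂ) * ((l⁻¹ : ℝ) : ℂ) = 1 := by push_cast; field_simp
    rw [hc, one_smul]
  -- the sets in the Hausdorff distance
  set T : Set ℝ := {s | ∃ x ∈ Set.range γ.anchors, s = ΩA.mkD x ω'} with hTdef
  have hTne : T.Nonempty := by
    obtain ⟨j⟩ := γ.instJ
    exact ⟨ΩA.mkD (γ.anchors j) ω', ⟨γ.anchors j, ⟨j, rfl⟩, rfl⟩⟩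
  have hsInfT : sInf T ≤ γ.imprint := by
    set O : Set ℝ := {r | ∃ y ∈ ΩA.Dball 1,
      r = sInf {s | ∃ x ∈ Set.range γ.anchors, s = ΩA.mkD x y}} with hOdef
    have hmemO : sInf T ∈ O := ⟨ω', ⟨hω', hDω'⟩, rfl⟩
    have hObdd : BddAbove O := by
      refine ⟨8, ?_⟩
      rintro r ⟨y, ⟨hy1, hy2⟩, rfl⟩
      obtain ⟨j⟩ := γ.instJ
      have hb : BddBelow {s | ∃ x ∈ Set.range γ.anchors, s = ΩA.mkD x y} := by
        refine ⟨0, ?_⟩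
        rintro s ⟨x, hx, rfl⟩
        exact ΩA.mkD_nonneg _ _
      have hmem : ΩA.mkD (γ.anchors j) y ∈
          {s | ∃ x ∈ Set.range γ.anchors, s = ΩA.mkD x y} := ⟨γ.anchors j, ⟨j, rfl⟩, rfl⟩
      refine (csInf_le hb hmem).trans ?_
      have h1 : ‖γ.anchors j‖ ≤ 1 := (ΩA.norm_le_D _ (γ.anchors_mem j)).trans (γ.anchors_le j)
      have h2 : ‖y‖ ≤ 1 := (ΩA.norm_le_D _ hy1).trans hy2
      refine (ΩA.mkD_le _ _).trans ?_
      have := norm_sub_le (γ.anchors j) y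
      linarith
    have h1 : sInf T ≤ sSup O := le_csSup hObdd hmemO
    refine h1.trans ?_
    refine le_trans (le_max_right _ _ :
      sSup O ≤ hausDist ΩA.mkD (Set.range γ.anchors) (ΩA.Dball 1)) (le_max_left _ _)
  obtain ⟨s, hsT, hslt⟩ := Real.lt_sInf_add_pos hTne hε
  obtain ⟨xa, ⟨j, rfl⟩, rfl⟩ := hsT
  have hjmk : ΩA.mkD (γ.anchors j) ω' ≤ γ.imprint + ε := le_of_lt (by linarith)
  refine ⟨(l : ℂ) • γ.coanchors j, ΩB.Ddom_smul _ _ (γ.coanchors_mem j), ?_, ?_⟩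
  · rw [ΩB.D_smul _ _ (γ.coanchors_mem j), Complex.norm_real, Real.norm_eq_abs,
      abs_of_pos hlpos]
    calc l * ΩB.D (γ.coanchors j) ≤ l * 1 :=
          mul_le_mul_of_nonneg_left (γ.coanchors_le j) hlpos.le
    _ = l := mul_one l
  · refine γ.dn_le _ _ fun k => ?_
    have key1 : ‖ΩA.inn ω (γ.anchors k) - (l : ℂ) • ΩA.inn (γ.anchors j) (γ.anchors k)‖
        ≤ l * (γ.imprint + ε) := by
      have e1 : ΩA.inn ω (γ.anchors k) = (l : ℂ) • ΩA.inn ω' (γ.anchors k) := by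
        rw [← ΩA.inn_smul_leftC, hres]
      rw [e1, ← smul_sub, norm_smul, Complex.norm_real, Real.norm_eq_abs, abs_of_pos hlpos]
      refine mul_le_mul_of_nonneg_left ?_ hlpos.le
      rw [norm_sub_rev]
      exact (ΩA.le_mkD (γ.anchors_mem k) (γ.anchors_le k) _ _).trans hjmk
    have hdnj : γ.dn (γ.anchors j) (γ.coanchors j) ≤ γ.modularReach :=
      γ.dn_anchors_le_modularReach j
    have term1 : γ.bn (ΩA.inn ω (γ.anchors k)) (ΩB.inn ((l : ℂ) • γ.coanchors j) (γ.coanchors k))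
        ≤ l * (γ.imprint + ε) + l * γ.modularReach := by
      rw [ΩB.inn_smul_leftC]
      refine (γ.bn_triangle_left _ ((l : ℂ) • ΩA.inn (γ.anchors j) (γ.anchors k)) _).trans ?_
      rw [γ.bn_smul_real hlpos.le]
      have hbn : γ.bn (ΩA.inn (γ.anchors j) (γ.anchors k))
          (ΩB.inn (γ.coanchors j) (γ.coanchors k)) ≤ γ.modularReach :=
        le_trans (le_trans (le_max_left _ _) (γ.le_dn (γ.anchors j) (γ.coanchors j) k)) hdnj
      have := mul_le_mul_of_nonneg_left hbn hlpos.le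
      linarith
    have term2 : γ.bn (ΩA.inn (γ.anchors k) ω) (ΩB.inn (γ.coanchors k) ((l : ℂ) • γ.coanchors j))
        ≤ l * (γ.imprint + ε) + l * γ.modularReach := by
      have e2 : ΩB.inn (γ.coanchors k) ((l : ℂ) • γ.coanchors j)
          = (l : ℂ) • ΩB.inn (γ.coanchors k) (γ.coanchors j) := by
        rw [ΩB.inn_smul_right, Complex.conj_ofReal]
      rw [e2]
      refine (γ.bn_triangle_left _ ((l : ℂ) • ΩA.inn (γ.anchors k) (γ.anchors j)) _).trans ?_
      rw [γ.bn_smul_real hlpos.le]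
      have key2 : ‖ΩA.inn (γ.anchors k) ω - (l : ℂ) • ΩA.inn (γ.anchors k) (γ.anchors j)‖
          ≤ l * (γ.imprint + ε) := by
        have estar : ΩA.inn (γ.anchors k) ω - (l : ℂ) • ΩA.inn (γ.anchors k) (γ.anchors j)
            = star (ΩA.inn ω (γ.anchors k) - (l : ℂ) • ΩA.inn (γ.anchors j) (γ.anchors k)) := by
          rw [star_sub, ΩA.inn_star, star_smul, ΩA.inn_star]
          congr 1
          rw [show star ((l : ℝ) : ℂ) = ((l : ℝ) : ℂ) by
            rw [Complex.star_def, Complex.conj_ofReal]]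
        rw [estar, norm_star]
        exact key1
      have hbn : γ.bn (ΩA.inn (γ.anchors k) (γ.anchors j))
          (ΩB.inn (γ.coanchors k) (γ.coanchors j)) ≤ γ.modularReach :=
        le_trans (le_trans (le_max_right _ _) (γ.le_dn (γ.anchors j) (γ.coanchors j) k)) hdnj
      have := mul_le_mul_of_nonneg_left hbn hlpos.le
      linarith
    have hfin : l * (γ.imprint + ε) + l * γ.modularReach ≤ l * γ.reach + l * ε := by
      have h1 : γ.modularReach + γ.imprint ≤ γ.reach := γ.modularReach_add_imprint_le_reach
      have := mul_le_mul_of_nonneg_left h1 hlpos.le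
      nlinarith
    exact max_le (term1.trans hfin) (term2.trans hfin)

lemma mtarget_nonempty (ω : ΩA.M) (hω : ω ∈ ΩA.Ddom) {l : ℝ} (hl : ΩA.D ω ≤ l) :
    (γ.mtarget ω l).Nonempty := by
  have hl0 : 0 ≤ l := (ΩA.D_nonneg ω).trans hl
  rcases hl0.eq_or_lt with rfl | hlpos
  · -- l = 0
    have hω0 : ω = 0 := by
      have h1 : ‖ω‖ ≤ 0 := (ΩA.norm_le_D ω hω).trans hl
      simpa using le_antisymm h1 (norm_nonneg ω)
    subst hω0
    refine ⟨0, ΩB.zero_mem_Ddom, le_of_eq ΩB.D_zero, ?_⟩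
    rw [zero_mul]
    refine γ.dn_le _ _ fun k => ?_
    simp only [ΩA.inn_zero_left, ΩB.inn_zero_left, ΩA.inn_zero_right, ΩB.inn_zero_right]
    have : γ.bn 0 0 = 0 := by
      unfold bn
      rw [map_zero, map_zero, zero_mul, mul_zero, sub_zero, norm_zero]
    rw [this, max_self]
  · -- l > 0
    have hstep : ∀ n : ℕ, ∃ η, η ∈ ΩB.Ddom ∧ ΩB.D η ≤ l ∧
        γ.dn ω η ≤ l * γ.reach + l * (1 / (n + 1)) := fun n =>
      γ.exists_approx ω hω hl hlpos (by positivity)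
    choose η hmem hD hdn using hstep
    have hball : ∀ n, η n ∈ ΩB.Dball l := fun n => ⟨hmem n, hD n⟩
    obtain ⟨ηlim, hηlim, φ, hφ, htend⟩ := (ΩB.isCompact_Dball hl0).tendsto_subseq hball
    have hdnlim : γ.dn ω ηlim ≤ l * γ.reach := by
      refine le_of_forall_pos_le_add fun δ hδ => ?_
      have hC : IsClosed {z : ΩB.M | γ.dn ω z ≤ l * γ.reach + δ} :=
        (γ.isClosed_dn_le (l * γ.reach + δ)).preimage (Continuous.prodMk_right ω)
      refine hC.mem_of_tendsto htend ?_
      obtain ⟨N, hN⟩ := exists_nat_gt (l / δ)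
      filter_upwards [Filter.eventually_ge_atTop N] with n hn
      have hφn : (N : ℝ) ≤ (φ n : ℝ) := by
        exact_mod_cast hn.trans (hφ.le_apply)
      have hbound : l * (1 / ((φ n : ℝ) + 1)) ≤ δ := by
        rw [mul_one_div, div_le_iff₀ (by positivity)]
        have : l / δ ≤ (φ n : ℝ) := le_trans hN.le hφn
        rw [div_le_iff₀ hδ] at this
        nlinarith
      exact le_trans (hdn (φ n)) (by linarith)
    exact ⟨ηlim, hηlim.1, hηlim.2, hdnlim⟩

end ModularBridge


namespace Trek

lemma mtarget_subset : ∀ {ΩA ΩB : BundledMQVB F G H} (Γ : Trek F G H ΩA ΩB)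
    (ω : ΩA.M) (l : ℝ), Γ.mtarget ω l ⊆ ΩB.Dball l := by
  intro ΩA ΩB Γ
  induction Γ with
  | single γ => exact fun ω l => γ.mtarget_subset ω l
  | cons γ Γ ih =>
    rintro ω l η ⟨ξ, hξ1, hξ2⟩
    exact ih ξ l hξ2

lemma isClosed_rel {l : ℝ} (hl : 0 ≤ l) :
    ∀ {ΩA ΩB : BundledMQVB F G H} (Γ : Trek F G H ΩA ΩB),
      IsClosed {p : ΩA.M × ΩB.M | p.2 ∈ Γ.mtarget p.1 l} := by
  intro ΩA ΩB Γ
  induction Γ with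
  | single γ => exact γ.isClosed_rel hl
  | @cons ΩA ΩB ΩC γ Γ ih =>
    apply IsSeqClosed.isClosed
    intro q p hmem htend
    choose ξ hξ1 hξ2 using hmem
    have hball : ∀ n, ξ n ∈ ΩB.Dball l := fun n => γ.mtarget_subset _ _ (hξ1 n)
    obtain ⟨ξlim, hξlim, φ, hφ, htendξ⟩ := (ΩB.isCompact_Dball hl).tendsto_subseq hball
    have htend1 : Filter.Tendsto (fun n => (q (φ n)).1) Filter.atTop (nhds p.1) :=
      ((continuous_fst.tendsto p).comp (htend.comp hφ.tendsto_atTop))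
    have htend2 : Filter.Tendsto (fun n => (q (φ n)).2) Filter.atTop (nhds p.2) :=
      ((continuous_snd.tendsto p).comp (htend.comp hφ.tendsto_atTop))
    have h1 : (p.1, ξlim) ∈ {r : ΩA.M × ΩB.M | r.2 ∈ γ.mtarget r.1 l} := by
      refine (γ.isClosed_rel hl).isSeqClosed (x := fun n => ((q (φ n)).1, ξ (φ n))) ?_ ?_
      · exact fun n => hξ1 (φ n)
      · exact htend1.prodMk_nhds htendξ
    have h2 : (ξlim, p.2) ∈ {r : ΩB.M × ΩC.M | r.2 ∈ Γ.mtarget r.1 l} := by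
      refine ih.isSeqClosed (x := fun n => (ξ (φ n), (q (φ n)).2)) ?_ ?_
      · exact fun n => hξ2 (φ n)
      · exact htendξ.prodMk_nhds htend2
    exact ⟨ξlim, h1, h2⟩

lemma mtarget_nonempty : ∀ {ΩA ΩB : BundledMQVB F G H} (Γ : Trek F G H ΩA ΩB)
    (ω : ΩA.M), ω ∈ ΩA.Ddom → ∀ {l : ℝ}, ΩA.D ω ≤ l → (Γ.mtarget ω l).Nonempty := by
  intro ΩA ΩB Γ
  induction Γ with
  | single γ => exact fun ω hω l hl => γ.mtarget_nonempty ω hω hl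
  | cons γ Γ ih =>
    intro ω hω l hl
    obtain ⟨ξ, hξ⟩ := γ.mtarget_nonempty ω hω hl
    obtain ⟨η, hη⟩ := ih ξ hξ.1 hξ.2.1
    exact ⟨η, ξ, hξ, hη⟩

end Trek

/-- for `ω ∈ dom(D_M)` and `l ≥ D_M(ω)`, the trek target set `t_Γ(ω|l)` is a
nonempty subset of the closed `l`-ball of the D-norm of `N`, compact for the C*-Hilbert
norm. -/
theorem statement13 {F : ℝ → ℝ → ℝ → ℝ → ℝ} {G : ℝ → ℝ → ℝ → ℝ} {H : ℝ → ℝ → ℝ}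
    (hFGH : AdmissibleTriple F G H)
    {ΩA ΩB : BundledMQVB F G H} (Γ : Trek F G H ΩA ΩB)
    (ω : ΩA.M) (hω : ω ∈ ΩA.Ddom) (l : ℝ) (hl : ΩA.D ω ≤ l) :
    (Γ.mtarget ω l).Nonempty ∧
    Γ.mtarget ω l ⊆ {η : ΩB.M | η ∈ ΩB.Ddom ∧ ΩB.D η ≤ l} ∧
    IsCompact (Γ.mtarget ω l) := by
  have hl0 : 0 ≤ l := (ΩA.D_nonneg ω).trans hl
  refine ⟨Γ.mtarget_nonempty ω hω hl, fun η hη => Γ.mtarget_subset ω l hη, ?_⟩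
  have hslice : Γ.mtarget ω l
      = (fun η : ΩB.M => (ω, η)) ⁻¹' {p : ΩA.M × ΩB.M | p.2 ∈ Γ.mtarget p.1 l} := rfl
  refine IsCompact.of_isClosed_subset (ΩB.isCompact_Dball hl0) ?_ (Γ.mtarget_subset ω l)
  rw [hslice]
  exact (Trek.isClosed_rel hl0 Γ).preimage (Continuous.prodMk_right ω)
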